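/- For an irrational right triangle with smaller angle α satisfying π/6 < α < π/4, the perpendicular billiard orbit starting at the left endpoint of the horizontal diagonal L of the associated rhombus has symbolic code 010 and returns to L perpendicularly at an interior point of L without hitting any vertex in between; hence it is a simple periodic loop. -/

import Mathlib

open Complex

/-- Reflection of the plane (identified with ℂ) across the line through the two distinct
points `u` and `v`. -/
noncomputable def reflLine (u v : ℂ) : ℂ → ℂ :=
  fun z => u + ((v - u) / (starRingEnd ℂ) (v - u)) * (starRingEnd ℂ) (z - u)

set_option maxHeartbeats 1000000

/-- let `Q` be an (irrational) right triangle with legs `a` (horizontal)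
and `b = a·tan α`, with smaller angle `α ∈ (π/6, π/4)`.  Unfolding across the legs gives
the rhombus with vertices `A = −a`, `B = ib`, `C = a`, `D = −ib`, horizontal diagonal
`L = [A, C]`, and acute angle `2α` at `A` and `C`.  The perpendicular (vertical) billiard
orbit starting at the left endpoint `A` of `L`, unfolded to the vertical ray
`t ↦ A + t·i`, crosses exactly the rhombus copies labelled `0, 1, 0` (so its symbolic
code is `010`): it passes through the interior of the copy `r₁(R)` (label 1, `r₁` the
reflection across the side `AB`), exits it through the interior of the side
`r₁(C)r₁(D)`, passes through the interior of the copy `r₂(r₁(R))` (label 0, `r₂` the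
reflection across `r₁(C)r₁(D)`), and then meets the image `r₂(r₁(L))` of `L` at an
interior point, hitting no vertex in between; moreover `r₂ ∘ r₁` is a translation, so the
unfolded vertical ray meets the image of `L` perpendicularly.  Hence the orbit returns to
`L` perpendicularly at an interior point of `L` and is a simple periodic loop. -/
theorem stmt12 (α a : ℝ) (hα : α ∈ Set.Ioo (Real.pi / 6) (Real.pi / 4))
    (hirr : Irrational (α / Real.pi)) (ha : 0 < a) :
    ∀ b : ℝ, b = a * Real.tan α →
    ∀ A B C D : ℂ, A = -(a : ℂ) → B = (b : ℝ) * Complex.I → C = (a : ℂ) →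
      D = -((b : ℝ) * Complex.I) →
    ∀ Rint : Set ℂ, Rint = {z : ℂ | |z.re| / a + |z.im| / b < 1} →
    ∀ r₁ r₂ : ℂ → ℂ, r₁ = reflLine A B → r₂ = reflLine (r₁ C) (r₁ D) →
    (∃ v : ℂ, ∀ z : ℂ, r₂ (r₁ z) = z + v) ∧
    ∃ t₁ t₂ : ℝ, 0 < t₁ ∧ t₁ < t₂ ∧
      (∀ t ∈ Set.Ioo 0 t₁, A + (t : ℝ) * Complex.I ∈ r₁ '' Rint) ∧
      A + (t₁ : ℝ) * Complex.I ∈ openSegment ℝ (r₁ C) (r₁ D) ∧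
      (∀ t ∈ Set.Ioo t₁ t₂, A + (t : ℝ) * Complex.I ∈ r₂ '' (r₁ '' Rint)) ∧
      A + (t₂ : ℝ) * Complex.I ∈ openSegment ℝ (r₂ (r₁ A)) (r₂ (r₁ C)) := by
  obtain ⟨hα1, hα2⟩ := hα
  intro b hbdef A B C D hA hB hC hD Rint hRint r₁ r₂ hr₁ hr₂
  have hπ := Real.pi_pos
  have hα0 : 0 < α := by linarith
  have hcα : 0 < Real.cos α := Real.cos_pos_of_mem_Ioo ⟨by linarith, by linarith⟩
  have hsα : 0 < Real.sin α := Real.sin_pos_of_pos_of_lt_pi hα0 (by linarith)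
  have hb : 0 < b := by
    rw [hbdef, Real.tan_eq_sin_div_cos]; positivity
  set s2 := Real.sin (2*α) with hs2def
  set c2 := Real.cos (2*α) with hc2def
  have hs2 : 0 < s2 := Real.sin_pos_of_pos_of_lt_pi (by linarith) (by linarith)
  have hc2 : 0 < c2 := Real.cos_pos_of_mem_Ioo ⟨by linarith, by linarith⟩
  have hc2' : c2 < 1/2 := by
    have h := Real.cos_lt_cos_of_nonneg_of_le_pi (by positivity)
      (by linarith : 2*α ≤ Real.pi) (by linarith : Real.pi/3 < 2*α)
    rwa [Real.cos_pi_div_three] at h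
  have pyth : Real.sin α ^ 2 + Real.cos α ^ 2 = 1 := Real.sin_sq_add_cos_sq α
  have pyth2 : s2^2 + c2^2 = 1 := Real.sin_sq_add_cos_sq _
  have h1 : b*s2 + a*c2 = a := by
    rw [hbdef, hs2def, hc2def, Real.sin_two_mul, Real.cos_two_mul,
      Real.tan_eq_sin_div_cos]
    field_simp
    linear_combination 2 * pyth
  have h2 : a*s2 - b*c2 = b := by
    rw [hbdef, hs2def, hc2def, Real.sin_two_mul, Real.cos_two_mul,
      Real.tan_eq_sin_div_cos]
    field_simp
    ring
  have key1 : a*c2 < b*s2 := by nlinarith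
  -- complex setup
  have pythC : (s2:ℂ)^2 + (c2:ℂ)^2 = 1 := by exact_mod_cast congrArg Complex.ofReal pyth2
  have h1C : (b:ℂ)*s2 + (a:ℂ)*c2 = a := by exact_mod_cast congrArg Complex.ofReal h1
  have h2C : (a:ℂ)*s2 - (b:ℂ)*c2 = b := by exact_mod_cast congrArg Complex.ofReal h2
  set K : ℂ := (c2:ℝ) + (s2:ℝ)*I with hKdef
  have hden : ((a:ℂ) - (b:ℂ)*I) ≠ 0 := by
    intro h
    have h' := congrArg Complex.re h
    simp at h'
    exact ha.ne' h'
  have hKeq : ((a:ℂ) + (b:ℂ)*I) = ((a:ℂ) - (b:ℂ)*I) * K := by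
    rw [hKdef]
    apply Complex.ext <;> simp [Complex.mul_re, Complex.mul_im] <;> linarith
  have hq : ((a:ℂ) + (b:ℂ)*I)/((a:ℂ) - (b:ℂ)*I) = K := by
    rw [hKeq, mul_comm, mul_div_assoc, div_self hden, mul_one]
  have hKconj : (starRingEnd ℂ) K = (c2:ℂ) - (s2:ℂ)*I := by
    rw [hKdef]; simp; ring
  have hKK : K * ((c2:ℂ) - (s2:ℂ)*I) = 1 := by
    rw [hKdef]
    linear_combination pythC - (s2:ℂ)^2*Complex.I_sq
  have hKmul : ∀ u v : ℝ, K * ((u:ℂ) + (v:ℂ)*I)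
      = ((c2*u - s2*v : ℝ):ℂ) + ((s2*u + c2*v : ℝ):ℂ)*I := by
    intro u v
    rw [hKdef]; push_cast
    linear_combination ((s2:ℂ)*(v:ℂ))*Complex.I_sq
  have hr1z : ∀ z : ℂ, r₁ z = -(a:ℂ) + K * ((starRingEnd ℂ) z + a) := by
    intro z
    rw [hr₁]
    show A + ((B - A) / (starRingEnd ℂ) (B - A)) * (starRingEnd ℂ) (z - A)
      = -(a:ℂ) + K * ((starRingEnd ℂ) z + a)
    rw [hA, hB]
    have e1 : (b:ℂ)*I - -(a:ℂ) = (a:ℂ) + (b:ℂ)*I := by ring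
    rw [e1]
    have e2 : (starRingEnd ℂ) ((a:ℂ) + (b:ℂ)*I) = (a:ℂ) - (b:ℂ)*I := by
      simp; ring
    rw [e2, hq]
    have e3 : (starRingEnd ℂ) (z - -(a:ℂ)) = (starRingEnd ℂ) z + (a:ℂ) := by
      simp
    rw [e3]
  have hr1C : r₁ C = -(a:ℂ) + K * (2*(a:ℂ)) := by
    rw [hr1z, hC, Complex.conj_ofReal]
    ring
  have hr1Cc : r₁ C = ((-a + 2*a*c2 : ℝ):ℂ) + ((2*a*s2 : ℝ):ℂ)*I := by
    rw [hr1C, hKdef]; push_cast; ring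
  have hr1D : r₁ D = ((-a + a*c2 - b*s2 : ℝ):ℂ) + ((a*s2 + b*c2 : ℝ):ℂ)*I := by
    rw [hr1z, hD]
    have e : (starRingEnd ℂ) (-((b:ℝ)*Complex.I)) + (a:ℂ) = ((a:ℝ):ℂ) + ((b:ℝ):ℂ)*I := by
      simp; ring
    rw [e, hKmul]
    push_cast; ring
  -- r₂ formula
  have hDC : r₁ D - r₁ C = -((a:ℂ) + (b:ℂ)*I) := by
    rw [hr1Cc, hr1D]
    apply Complex.ext <;> simp <;> push_cast <;> linarith
  have hr2z : ∀ z : ℂ, r₂ z = r₁ C + K * ((starRingEnd ℂ) z - (starRingEnd ℂ) (r₁ C)) := by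
    intro z
    rw [hr₂]
    show r₁ C + ((r₁ D - r₁ C) / (starRingEnd ℂ) (r₁ D - r₁ C)) * (starRingEnd ℂ) (z - r₁ C)
      = _
    rw [hDC]
    have e2 : (starRingEnd ℂ) (-((a:ℂ) + (b:ℂ)*I)) = -((a:ℂ) - (b:ℂ)*I) := by
      simp; ring
    rw [e2, neg_div_neg_eq, hq, map_sub]
  set v : ℂ := 2*(a:ℂ)*K - 2*(a:ℂ) with hvdef
  have hKK' : K * (starRingEnd ℂ) K = 1 := by rw [hKconj]; exact hKK
  have htrans : ∀ z : ℂ, r₂ (r₁ z) = z + v := by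
    intro z
    rw [hr2z, hr1z, hr1z, hC, Complex.conj_ofReal]
    have e1 : (starRingEnd ℂ) (-(a:ℂ) + K * ((starRingEnd ℂ) z + (a:ℂ)))
        = -(a:ℂ) + (starRingEnd ℂ) K * (z + a) := by
      simp
    have e2 : (starRingEnd ℂ) (-(a:ℂ) + K * ((a:ℂ) + (a:ℂ)))
        = -(a:ℂ) + (starRingEnd ℂ) K * ((a:ℂ) + (a:ℂ)) := by
      simp
    rw [e1, e2, hvdef]
    linear_combination (z - (a:ℂ)) * hKK'
  refine ⟨⟨v, htrans⟩, 2*b, 2*a*s2, by linarith, ?_, ?_, ?_, ?_, ?_⟩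
  · nlinarith [mul_pos hb hc2]
  · -- first crossing: copy r₁(R)
    rintro t ⟨ht0, ht1⟩
    refine ⟨((-a + t*s2 : ℝ):ℂ) + ((-(t*c2) : ℝ):ℂ)*I, ?_, ?_⟩
    · rw [hRint]
      have hre : ((((-a + t*s2 : ℝ):ℂ) + ((-(t*c2) : ℝ):ℂ)*I)).re = -a + t*s2 := by simp
      have him : ((((-a + t*s2 : ℝ):ℂ) + ((-(t*c2) : ℝ):ℂ)*I)).im = -(t*c2) := by simp
      simp only [Set.mem_setOf_eq, hre, him]
      rw [abs_neg, abs_of_pos (by positivity : (0:ℝ) < t*c2)]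
      rw [div_add_div _ _ (ne_of_gt ha) (ne_of_gt hb), div_lt_one (by positivity)]
      have h1t : t*(b*s2) + t*(a*c2) = t*a := by linear_combination t*h1
      rcases abs_cases (-a + t*s2) with ⟨he,_⟩|⟨he,_⟩ <;> rw [he] <;>
        nlinarith [h1t, mul_lt_mul_of_pos_left ht1 ha, mul_pos ht0 (sub_pos.mpr key1)]
    · rw [hr1z]
      have e : (starRingEnd ℂ) (((-a + t*s2 : ℝ):ℂ) + ((-(t*c2) : ℝ):ℂ)*I) + (a:ℂ)
          = ((t*s2 : ℝ):ℂ) + ((t*c2 : ℝ):ℂ)*I := by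
        simp; push_cast; ring
      rw [e, hKmul, hA]
      push_cast
      linear_combination (t:ℂ)*Complex.I*pythC
  · -- exit through side r₁C r₁D
    refine ⟨1 - 2*c2, 2*c2, by linarith, by linarith, by ring, ?_⟩
    rw [hr1Cc, hr1D, hA, Complex.real_smul, Complex.real_smul]
    push_cast
    linear_combination (-2*(c2:ℂ))*h1C + ((2:ℂ) - 2*(c2:ℂ))*Complex.I*h2C
  · -- second copy
    rintro t ⟨htl, htr⟩
    refine ⟨r₁ (((a - 2*a*c2 : ℝ):ℂ) + ((t - 2*a*s2 : ℝ):ℂ)*I),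
      ⟨((a - 2*a*c2 : ℝ):ℂ) + ((t - 2*a*s2 : ℝ):ℂ)*I, ?_, rfl⟩, ?_⟩
    · rw [hRint]
      have hre : ((((a - 2*a*c2 : ℝ):ℂ) + ((t - 2*a*s2 : ℝ):ℂ)*I)).re = a - 2*a*c2 := by simp
      have him : ((((a - 2*a*c2 : ℝ):ℂ) + ((t - 2*a*s2 : ℝ):ℂ)*I)).im = t - 2*a*s2 := by simp
      simp only [Set.mem_setOf_eq, hre, him]
      rw [abs_of_pos (by nlinarith : (0:ℝ) < a - 2*a*c2),
        abs_of_neg (by linarith : t - 2*a*s2 < 0)]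
      rw [div_add_div _ _ (ne_of_gt ha) (ne_of_gt hb), div_lt_one (by positivity)]
      have h2a : a*(a*s2) - a*(b*c2) = a*b := by linear_combination a*h2
      nlinarith [h2a, mul_lt_mul_of_pos_left htl ha]
    · rw [htrans, hvdef, hKdef, hA]
      push_cast
      ring
  · -- return to L
    rw [htrans, htrans, hvdef, hKdef]
    refine ⟨c2, 1 - c2, hc2, by linarith, by ring, ?_⟩
    rw [hA, hC, Complex.real_smul, Complex.real_smul]
    push_cast
    ring
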